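/- Let p = (p_1, p_2) ∈ ℤ² be a primitive vector and set q = (−p_2, p_1). For a ∈ ℝ², define g_a : ℝ² → ℝ by g_a(ξ) = ∏_{i∈{1,2}: q_i ≥ 0} (e·ξ_i)^{q_i} − e^{⟨a,q⟩} ∏_{i∈{1,2}: q_i ≤ 0} (e·ξ_i)^{−q_i}. Then the following are equivalent: (i) for every a ∈ ℝ², the gradient ∇g_a(ξ) is nonzero at every ξ ∈ (ℝ_{≥0})² with g_a(ξ) = 0; (ii) p or −p belongs to A_{++} ∪ A_{+−}, where A_{++} = {(1, b) : b ∈ ℤ, b ≥ 0} ∪ {(b, 1) : b ∈ ℤ, b ≥ 0} and A_{+−} = {(c_1, c_2) ∈ ℤ² : c_1 ≥ 0, c_2 < 0}. (This computes the standard local model 𝒱_O for n = 2, k = 1: the set of lines ℝp such that D̄(V) is a submanifold with corners near the standard corner.) -/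

import Mathlib

open Finset

noncomputable def GG (E : ℝ) (a0 a1 b0 b1 : ℕ) : (Fin 2 → ℝ) → ℝ :=
  fun ξ => (Real.exp 1 * ξ 0) ^ a0 * (Real.exp 1 * ξ 1) ^ a1
    - E * ((Real.exp 1 * ξ 0) ^ b0 * (Real.exp 1 * ξ 1) ^ b1)

noncomputable def PJ (i : Fin 2) : (Fin 2 → ℝ) →L[ℝ] ℝ := ContinuousLinearMap.proj i

lemma hasFDerivAt_GG (E : ℝ) (a0 a1 b0 b1 : ℕ) (ξ : Fin 2 → ℝ) :
    HasFDerivAt (GG E a0 a1 b0 b1)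
      (((Real.exp 1 * ξ 0) ^ a0 • (((a1 : ℝ) * (Real.exp 1 * ξ 1) ^ (a1-1)) • (Real.exp 1 • PJ 1))
        + (Real.exp 1 * ξ 1) ^ a1 • (((a0 : ℝ) * (Real.exp 1 * ξ 0) ^ (a0-1)) • (Real.exp 1 • PJ 0)))
       - E • ((Real.exp 1 * ξ 0) ^ b0 • (((b1 : ℝ) * (Real.exp 1 * ξ 1) ^ (b1-1)) • (Real.exp 1 • PJ 1))
        + (Real.exp 1 * ξ 1) ^ b1 • (((b0 : ℝ) * (Real.exp 1 * ξ 0) ^ (b0-1)) • (Real.exp 1 • PJ 0)))) ξ := by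
  have h0 : HasFDerivAt (fun ξ : Fin 2 → ℝ => ξ 0) (PJ 0) ξ := (PJ 0).hasFDerivAt
  have h1 : HasFDerivAt (fun ξ : Fin 2 → ℝ => ξ 1) (PJ 1) ξ := (PJ 1).hasFDerivAt
  have P0 := fun n => (hasDerivAt_pow n (Real.exp 1 * ξ 0)).comp_hasFDerivAt ξ (h0.const_mul (Real.exp 1))
  have P1 := fun n => (hasDerivAt_pow n (Real.exp 1 * ξ 1)).comp_hasFDerivAt ξ (h1.const_mul (Real.exp 1))
  exact ((P0 a0).mul (P1 a1)).sub (((P0 b0).mul (P1 b1)).const_mul E)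

lemma fderiv_GG0 (E : ℝ) (a0 a1 b0 b1 : ℕ) (ξ : Fin 2 → ℝ) :
    fderiv ℝ (GG E a0 a1 b0 b1) ξ (Pi.single 0 1) =
      (Real.exp 1 * ξ 1) ^ a1 * ((a0 : ℝ) * (Real.exp 1 * ξ 0) ^ (a0-1)) * Real.exp 1
      - E * ((Real.exp 1 * ξ 1) ^ b1 * ((b0 : ℝ) * (Real.exp 1 * ξ 0) ^ (b0-1)) * Real.exp 1) := by
  rw [(hasFDerivAt_GG E a0 a1 b0 b1 ξ).fderiv]
  simp [PJ, mul_assoc]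

lemma fderiv_GG1 (E : ℝ) (a0 a1 b0 b1 : ℕ) (ξ : Fin 2 → ℝ) :
    fderiv ℝ (GG E a0 a1 b0 b1) ξ (Pi.single 1 1) =
      (Real.exp 1 * ξ 0) ^ a0 * ((a1 : ℝ) * (Real.exp 1 * ξ 1) ^ (a1-1)) * Real.exp 1
      - E * ((Real.exp 1 * ξ 0) ^ b0 * ((b1 : ℝ) * (Real.exp 1 * ξ 1) ^ (b1-1)) * Real.exp 1) := by
  rw [(hasFDerivAt_GG E a0 a1 b0 b1 ξ).fderiv]
  simp [PJ, mul_assoc]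

/-- Case with both exponents in the first product: regularity holds. -/
lemma lhs_case1 (E : ℝ) (hE : 0 < E) (a0 a1 : ℕ) (h : a0 ≠ 0 ∨ a1 ≠ 0) (ξ : Fin 2 → ℝ)
    (h0 : GG E a0 a1 0 0 ξ = 0) :
    ∃ i : Fin 2, fderiv ℝ (GG E a0 a1 0 0) ξ (Pi.single i 1) ≠ 0 := by
  have he : Real.exp 1 ≠ 0 := (Real.exp_pos 1).ne'
  have hprod : (Real.exp 1 * ξ 0) ^ a0 * (Real.exp 1 * ξ 1) ^ a1 = E := by
    have := h0; simp only [GG, pow_zero, mul_one] at this; linarith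
  have hf0 : (Real.exp 1 * ξ 0) ^ a0 ≠ 0 := by
    intro hc; rw [hc, zero_mul] at hprod; exact hE.ne' hprod.symm
  have hf1 : (Real.exp 1 * ξ 1) ^ a1 ≠ 0 := by
    intro hc; rw [hc, mul_zero] at hprod; exact hE.ne' hprod.symm
  rcases h with h | h
  · refine ⟨0, ?_⟩
    rw [fderiv_GG0]
    have hb0 : (Real.exp 1 * ξ 0) ^ (a0 - 1) ≠ 0 :=
      pow_ne_zero _ (fun hc => hf0 (by rw [hc, zero_pow h]))
    have : (Real.exp 1 * ξ 1) ^ a1 * ((a0 : ℝ) * (Real.exp 1 * ξ 0) ^ (a0-1)) * Real.exp 1 ≠ 0 := by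
      exact mul_ne_zero (mul_ne_zero hf1 (mul_ne_zero (Nat.cast_ne_zero.mpr h) hb0)) he
    simpa using this
  · refine ⟨1, ?_⟩
    rw [fderiv_GG1]
    have hb1 : (Real.exp 1 * ξ 1) ^ (a1 - 1) ≠ 0 :=
      pow_ne_zero _ (fun hc => hf1 (by rw [hc, zero_pow h]))
    have : (Real.exp 1 * ξ 0) ^ a0 * ((a1 : ℝ) * (Real.exp 1 * ξ 1) ^ (a1-1)) * Real.exp 1 ≠ 0 := by
      exact mul_ne_zero (mul_ne_zero hf0 (mul_ne_zero (Nat.cast_ne_zero.mpr h) hb1)) he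
    simpa using this

/-- Case with both exponents in the second product: regularity holds. -/
lemma lhs_case2 (E : ℝ) (hE : 0 < E) (b0 b1 : ℕ) (h : b0 ≠ 0 ∨ b1 ≠ 0) (ξ : Fin 2 → ℝ)
    (h0 : GG E 0 0 b0 b1 ξ = 0) :
    ∃ i : Fin 2, fderiv ℝ (GG E 0 0 b0 b1) ξ (Pi.single i 1) ≠ 0 := by
  have he : Real.exp 1 ≠ 0 := (Real.exp_pos 1).ne'
  have hprod : E * ((Real.exp 1 * ξ 0) ^ b0 * (Real.exp 1 * ξ 1) ^ b1) = 1 := by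
    have := h0; simp only [GG, pow_zero, mul_one, one_mul] at this; linarith
  have hf0 : (Real.exp 1 * ξ 0) ^ b0 ≠ 0 := by
    intro hc; rw [hc, zero_mul, mul_zero] at hprod; exact one_ne_zero hprod.symm
  have hf1 : (Real.exp 1 * ξ 1) ^ b1 ≠ 0 := by
    intro hc; rw [hc, mul_zero, mul_zero] at hprod; exact one_ne_zero hprod.symm
  rcases h with h | h
  · refine ⟨0, ?_⟩
    rw [fderiv_GG0]
    have hb0 : (Real.exp 1 * ξ 0) ^ (b0 - 1) ≠ 0 :=
      pow_ne_zero _ (fun hc => hf0 (by rw [hc, zero_pow h]))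
    have : E * ((Real.exp 1 * ξ 1) ^ b1 * ((b0 : ℝ) * (Real.exp 1 * ξ 0) ^ (b0-1)) * Real.exp 1) ≠ 0 :=
      mul_ne_zero hE.ne' (mul_ne_zero (mul_ne_zero hf1 (mul_ne_zero (Nat.cast_ne_zero.mpr h) hb0)) he)
    simpa using this
  · refine ⟨1, ?_⟩
    rw [fderiv_GG1]
    have hb1 : (Real.exp 1 * ξ 1) ^ (b1 - 1) ≠ 0 :=
      pow_ne_zero _ (fun hc => hf1 (by rw [hc, zero_pow h]))
    have : E * ((Real.exp 1 * ξ 0) ^ b0 * ((b1 : ℝ) * (Real.exp 1 * ξ 1) ^ (b1-1)) * Real.exp 1) ≠ 0 :=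
      mul_ne_zero hE.ne' (mul_ne_zero (mul_ne_zero hf0 (mul_ne_zero (Nat.cast_ne_zero.mpr h) hb1)) he)
    simpa using this

lemma lhs_D1 (E : ℝ) (b1 : ℕ) (ξ : Fin 2 → ℝ) :
    fderiv ℝ (GG E 1 0 0 b1) ξ (Pi.single 0 1) = Real.exp 1 := by
  rw [fderiv_GG0]; simp

lemma lhs_D2 (E : ℝ) (a0 : ℕ) (ξ : Fin 2 → ℝ) :
    fderiv ℝ (GG E a0 0 0 1) ξ (Pi.single 1 1) = -(E * Real.exp 1) := by
  rw [fderiv_GG1]; simp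

lemma lhs_D3 (E : ℝ) (b0 : ℕ) (ξ : Fin 2 → ℝ) :
    fderiv ℝ (GG E 0 1 b0 0) ξ (Pi.single 1 1) = Real.exp 1 := by
  rw [fderiv_GG1]; simp

lemma lhs_D4 (E : ℝ) (a1 : ℕ) (ξ : Fin 2 → ℝ) :
    fderiv ℝ (GG E 0 a1 1 0) ξ (Pi.single 0 1) = -(E * Real.exp 1) := by
  rw [fderiv_GG0]; simp

/-- Failure of regularity at the origin when both mixed exponents are at least 2. -/
lemma lhs_F1 (E : ℝ) (a1 b0 : ℕ) (h1 : 2 ≤ a1) (h0 : 2 ≤ b0) :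
    GG E 0 a1 b0 0 (fun _ => 0) = 0 ∧
      ∀ i : Fin 2, fderiv ℝ (GG E 0 a1 b0 0) (fun _ => 0) (Pi.single i 1) = 0 := by
  have ha : a1 ≠ 0 := by omega
  have hb : b0 ≠ 0 := by omega
  have ha' : a1 - 1 ≠ 0 := by omega
  have hb' : b0 - 1 ≠ 0 := by omega
  refine ⟨by simp [GG, zero_pow ha, zero_pow hb], fun i => ?_⟩
  fin_cases i
  · show fderiv ℝ (GG E 0 a1 b0 0) (fun _ => 0) (Pi.single 0 1) = 0
    rw [fderiv_GG0]; simp [zero_pow ha, zero_pow hb']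
  · show fderiv ℝ (GG E 0 a1 b0 0) (fun _ => 0) (Pi.single 1 1) = 0
    rw [fderiv_GG1]; simp [zero_pow ha', zero_pow hb]

lemma lhs_F2 (E : ℝ) (a0 b1 : ℕ) (h1 : 2 ≤ a0) (h0 : 2 ≤ b1) :
    GG E a0 0 0 b1 (fun _ => 0) = 0 ∧
      ∀ i : Fin 2, fderiv ℝ (GG E a0 0 0 b1) (fun _ => 0) (Pi.single i 1) = 0 := by
  have ha : a0 ≠ 0 := by omega
  have hb : b1 ≠ 0 := by omega
  have ha' : a0 - 1 ≠ 0 := by omega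
  have hb' : b1 - 1 ≠ 0 := by omega
  refine ⟨by simp [GG, zero_pow ha, zero_pow hb], fun i => ?_⟩
  fin_cases i
  · show fderiv ℝ (GG E a0 0 0 b1) (fun _ => 0) (Pi.single 0 1) = 0
    rw [fderiv_GG0]; simp [zero_pow ha', zero_pow hb]
  · show fderiv ℝ (GG E a0 0 0 b1) (fun _ => 0) (Pi.single 1 1) = 0
    rw [fderiv_GG1]; simp [zero_pow ha, zero_pow hb']

lemma if_pow (n : ℤ) (x : ℝ) : (if 0 ≤ n then x ^ n.toNat else 1) = x ^ n.toNat := by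
  split_ifs with h
  · rfl
  · rw [Int.toNat_of_nonpos (by omega), pow_zero]

lemma if_pow' (n : ℤ) (x : ℝ) : (if n ≤ 0 then x ^ (-n).toNat else 1) = x ^ (-n).toNat := by
  split_ifs with h
  · rfl
  · rw [Int.toNat_of_nonpos (by omega), pow_zero]

/-- Standard local model for `n = 2`, `k = 1`: for a primitive `p = (p₁, p₂)`
with `q = (−p₂, p₁)` and defining function `g a`, the gradient of `g a` is nonzero at every
zero of `g a` in `(ℝ_{≥0})²` for every translation `a` if and only if `p` or `−p` lies in
`A_{++} ∪ A_{+−}`. -/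
theorem stmt17 (p₁ p₂ : ℤ) (hp : Int.gcd p₁ p₂ = 1)
    (q : Fin 2 → ℤ) (hq : q = ![-p₂, p₁])
    (g : (Fin 2 → ℝ) → (Fin 2 → ℝ) → ℝ)
    (hg : ∀ a ξ, g a ξ =
      (∏ i ∈ univ.filter fun i => 0 ≤ q i, (Real.exp 1 * ξ i) ^ (q i).toNat)
      - Real.exp (∑ i, a i * (q i : ℝ)) *
          ∏ i ∈ univ.filter fun i => q i ≤ 0, (Real.exp 1 * ξ i) ^ (-q i).toNat) :
    ((∀ (a ξ : Fin 2 → ℝ), (∀ i, 0 ≤ ξ i) → g a ξ = 0 →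
        ∃ i, fderiv ℝ (g a) ξ (Pi.single i 1) ≠ 0)
     ↔
     (((p₁ = 1 ∧ 0 ≤ p₂) ∨ (p₂ = 1 ∧ 0 ≤ p₁) ∨ (0 ≤ p₁ ∧ p₂ < 0)) ∨
      ((-p₁ = 1 ∧ 0 ≤ -p₂) ∨ (-p₂ = 1 ∧ 0 ≤ -p₁) ∨ (0 ≤ -p₁ ∧ -p₂ < 0)))) := by
  subst hq
  -- facts from primitivity
  have hz : ¬(p₁ = 0 ∧ p₂ = 0) := by
    rintro ⟨rfl, rfl⟩; simp at hp
  have h10 : p₂ = 0 → p₁ = 1 ∨ p₁ = -1 := by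
    intro h; subst h; rw [Int.gcd_zero_right] at hp
    rcases Int.natAbs_eq_iff.mp hp with h | h <;> [left; right] <;> exact_mod_cast h
  have h01 : p₁ = 0 → p₂ = 1 ∨ p₂ = -1 := by
    intro h; subst h; rw [Int.gcd_zero_left] at hp
    rcases Int.natAbs_eq_iff.mp hp with h | h <;> [left; right] <;> exact_mod_cast h
  -- rewrite g as GG
  have hgf : ∀ a, g a = GG (Real.exp (∑ i, a i * ((![-p₂, p₁] : Fin 2 → ℤ) i : ℝ)))
      (-p₂).toNat p₁.toNat p₂.toNat (-p₁).toNat := by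
    intro a; funext ξ
    rw [hg]
    simp only [GG]
    rw [Finset.prod_filter, Finset.prod_filter, Fin.prod_univ_two, Fin.prod_univ_two]
    simp only [Matrix.cons_val_zero, Matrix.cons_val_one, Matrix.head_cons]
    erw [if_pow, if_pow, if_pow', if_pow', neg_neg]
  simp only [hgf]
  set E : (Fin 2 → ℝ) → ℝ := fun a => Real.exp (∑ i, a i * ((![-p₂, p₁] : Fin 2 → ℤ) i : ℝ)) with hE
  have hEpos : ∀ a, 0 < E a := fun a => Real.exp_pos _
  rcases le_or_gt p₂ 0 with hp2 | hp2 <;> rcases le_or_gt 0 p₁ with hp1 | hp1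
  · -- p₂ ≤ 0 ≤ p₁ : both exponents in first product
    have hb0 : p₂.toNat = 0 := by omega
    have hb1 : (-p₁).toNat = 0 := by omega
    have hne : (-p₂).toNat ≠ 0 ∨ p₁.toNat ≠ 0 := by omega
    rw [hb0, hb1]
    refine iff_of_true (fun a ξ _ h0 => lhs_case1 _ (hEpos a) _ _ hne ξ h0) ?_
    omega
  · -- p₂ ≤ 0, p₁ < 0 : mixed, shape GG E a0 0 0 b1
    have ha1 : p₁.toNat = 0 := by omega
    have hb0 : p₂.toNat = 0 := by omega
    rw [ha1, hb0]
    have htri : p₂ = -1 ∨ p₁ = -1 ∨ (p₂ ≤ -2 ∧ p₁ ≤ -2) := by omega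
    rcases htri with h | h | ⟨h2, h1⟩
    · have : (-p₂).toNat = 1 := by omega
      rw [this]
      refine iff_of_true (fun a ξ _ _ => ⟨0, ?_⟩) (by omega)
      rw [lhs_D1]; exact (Real.exp_pos 1).ne'
    · have : (-p₁).toNat = 1 := by omega
      rw [this]
      refine iff_of_true (fun a ξ _ _ => ⟨1, ?_⟩) (by omega)
      rw [lhs_D2]; exact (neg_ne_zero.mpr (mul_ne_zero (hEpos a).ne' (Real.exp_pos 1).ne'))
    · have hA : 2 ≤ (-p₂).toNat := by omega
      have hB : 2 ≤ (-p₁).toNat := by omega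
      refine iff_of_false (fun hL => ?_) (by omega)
      obtain ⟨hz0, hd0⟩ := lhs_F2 (E fun _ => 0) _ _ hA hB
      obtain ⟨i, hi⟩ := hL (fun _ => 0) (fun _ => 0) (fun _ => le_refl 0) hz0
      exact hi (hd0 i)
  · -- 0 < p₂, 0 ≤ p₁ : mixed, shape GG E 0 a1 b0 0
    have ha0 : (-p₂).toNat = 0 := by omega
    have hb1 : (-p₁).toNat = 0 := by omega
    rw [ha0, hb1]
    have htri : p₁ = 1 ∨ p₂ = 1 ∨ (2 ≤ p₁ ∧ 2 ≤ p₂) := by omega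
    rcases htri with h | h | ⟨h1, h2⟩
    · have : p₁.toNat = 1 := by omega
      rw [this]
      refine iff_of_true (fun a ξ _ _ => ⟨1, ?_⟩) (by omega)
      rw [lhs_D3]; exact (Real.exp_pos 1).ne'
    · have : p₂.toNat = 1 := by omega
      rw [this]
      refine iff_of_true (fun a ξ _ _ => ⟨0, ?_⟩) (by omega)
      rw [lhs_D4]; exact (neg_ne_zero.mpr (mul_ne_zero (hEpos a).ne' (Real.exp_pos 1).ne'))
    · have hA : 2 ≤ p₁.toNat := by omega
      have hB : 2 ≤ p₂.toNat := by omega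
      refine iff_of_false (fun hL => ?_) (by omega)
      obtain ⟨hz0, hd0⟩ := lhs_F1 (E fun _ => 0) _ _ hA hB
      obtain ⟨i, hi⟩ := hL (fun _ => 0) (fun _ => 0) (fun _ => le_refl 0) hz0
      exact hi (hd0 i)
  · -- 0 < p₂, p₁ < 0 : both exponents in second product
    have ha0 : (-p₂).toNat = 0 := by omega
    have ha1 : p₁.toNat = 0 := by omega
    have hne : p₂.toNat ≠ 0 ∨ (-p₁).toNat ≠ 0 := by omega
    rw [ha0, ha1]
    refine iff_of_true (fun a ξ _ h0 => lhs_case2 _ (hEpos a) _ _ hne ξ h0) ?_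
    omega
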